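/- arXiv:1604.00346 — 2 statements merged into one kernel-verified Lean document; each statement's English description precedes it below -/
import Mathlib

section
/- Pseudo-increasing refactoring theorem in the presence of modify operations: for every base program B : α → Option β and every list L of generalized conditional delta operations, there exist a base program B' and a list L' of generalized conditional delta operations such that: (i) L' contains no remove, i.e. no operation whose update component is Sum.inl none; (ii) for every product p, variant B' L' p = variant B L p; (iii) every modify of L', i.e. every operation (c', k, Sum.inr f), satisfies ∃ c, (c, k, Sum.inr f) ∈ L (the refactoring does not introduce new modify operations); and (iv) for every reference k, B' k = B k or B' k = none. -/
open Classical in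
/-- The variant generated for product `p` from base program `B` and a list `L` of
generalized conditional delta operations (adds/removes via `Sum.inl`, modifies via
`Sum.inr`). -/
noncomputable def variant {α β ρ : Type*} (B : α → Option β)
    (L : List ((ρ → Prop) × α × (Option β ⊕ (β → β)))) (p : ρ) : α → Option β :=
  L.foldl (fun P op =>
    if op.1 p then
      match op.2.2 with
      | Sum.inl o => Function.update P op.2.1 o
      | Sum.inr f => Function.update P op.2.1 (Option.map f (P op.2.1))
    else P) B

section Aux

open Classical

variable {α β ρ : Type*}

/-- One step of the variant fold. -/
noncomputable def dstep (p : ρ) (P : α → Option β)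
    (op : (ρ → Prop) × α × (Option β ⊕ (β → β))) : α → Option β :=
  if op.1 p then
    match op.2.2 with
    | Sum.inl o => Function.update P op.2.1 o
    | Sum.inr f => Function.update P op.2.1 (Option.map f (P op.2.1))
  else P

lemma variant_eq (B : α → Option β)
    (L : List ((ρ → Prop) × α × (Option β ⊕ (β → β)))) (p : ρ) :
    variant B L p = L.foldl (dstep p) B := rfl

lemma dstep_ne (p : ρ) (P : α → Option β)
    (op : (ρ → Prop) × α × (Option β ⊕ (β → β))) (j : α) (h : j ≠ op.2.1) :
    dstep p P op j = P j := by
  unfold dstep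
  split
  · rcases op with ⟨c, k, u⟩
    cases u <;> simp [Function.update_of_ne h]
  · rfl

lemma dstep_update_ne (p : ρ) (op : (ρ → Prop) × α × (Option β ⊕ (β → β)))
    {k : α} (hk : op.2.1 ≠ k) (Q : α → Option β) (o : Option β) :
    dstep p (Function.update Q k o) op = Function.update (dstep p Q op) k o := by
  unfold dstep
  split
  · rcases op with ⟨c, k', u⟩
    simp only at hk ⊢
    cases u with
    | inl o' => rw [Function.update_comm hk]
    | inr f =>
      rw [Function.update_of_ne hk, Function.update_comm hk]
  · rfl

lemma fold_true {c : ρ → Prop} {k : α} (p : ρ) (hc : c p)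
    (L : List ((ρ → Prop) × α × (Option β ⊕ (β → β)))) :
    ∀ Q : α → Option β,
    (L.map (fun op => if op.2.1 = k then ((fun q => op.1 q ∧ ¬ c q), op.2) else op)).foldl
        (dstep p) (Function.update Q k none)
      = Function.update (L.foldl (dstep p) Q) k none := by
  induction L with
  | nil => intro Q; rfl
  | cons op L ih =>
    intro Q
    by_cases hk : op.2.1 = k
    · simp only [List.map_cons, List.foldl_cons, if_pos hk]
      have h1 : dstep p (Function.update Q k none) ((fun q => op.1 q ∧ ¬ c q), op.2)
          = Function.update Q k none := by
        unfold dstep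
        rw [if_neg]
        simp only [not_and, not_not]
        intro _; exact hc
      have h2 : Function.update Q k none = Function.update (dstep p Q op) k none := by
        funext j
        by_cases hj : j = k
        · subst hj; simp
        · rw [Function.update_of_ne hj, Function.update_of_ne hj, dstep_ne]
          rw [hk]; exact hj
      rw [h1, h2, ih]
    · simp only [List.map_cons, List.foldl_cons, if_neg hk]
      rw [dstep_update_ne p op hk, ih]

lemma fold_false {c : ρ → Prop} {k : α} (p : ρ) (hc : ¬ c p)
    (L : List ((ρ → Prop) × α × (Option β ⊕ (β → β)))) :
    ∀ Q : α → Option β,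
    (L.map (fun op => if op.2.1 = k then ((fun q => op.1 q ∧ ¬ c q), op.2) else op)).foldl
        (dstep p) Q
      = L.foldl (dstep p) Q := by
  induction L with
  | nil => intro Q; rfl
  | cons op L ih =>
    intro Q
    by_cases hk : op.2.1 = k
    · simp only [List.map_cons, List.foldl_cons, if_pos hk]
      have h1 : dstep p Q ((fun q => op.1 q ∧ ¬ c q), op.2) = dstep p Q op := by
        unfold dstep
        by_cases h : op.1 p
        · rw [if_pos ⟨h, hc⟩, if_pos h]
        · rw [if_neg (by simp only [not_and]; intro h'; exact absurd h' h), if_neg h]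
      rw [h1, ih]
    · simp only [List.map_cons, List.foldl_cons, if_neg hk]
      rw [ih]

end Aux

/-- Pseudo-increasing refactoring theorem in the presence of modify operations. -/
theorem pseudo_increasing_refactoring {α β ρ : Type*} (B : α → Option β)
    (L : List ((ρ → Prop) × α × (Option β ⊕ (β → β)))) :
    ∃ (B' : α → Option β) (L' : List ((ρ → Prop) × α × (Option β ⊕ (β → β)))),
      (∀ op ∈ L', op.2.2 ≠ Sum.inl (none : Option β)) ∧
      (∀ p : ρ, variant B' L' p = variant B L p) ∧
      (∀ (c' : ρ → Prop) (k : α) (f : β → β), (c', k, Sum.inr f) ∈ L' →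
        ∃ c : ρ → Prop, (c, k, Sum.inr f) ∈ L) ∧
      (∀ k : α, B' k = B k ∨ B' k = none) := by
  classical
  induction L using List.reverseRecOn with
  | nil =>
    exact ⟨B, [], by simp, fun p => rfl, by simp, fun k => Or.inl rfl⟩
  | append_singleton L op ih =>
    obtain ⟨B', L', hnr, hvar, hmod, hbase⟩ := ih
    obtain ⟨c, k, u⟩ := op
    have hvapp : ∀ p, variant B (L ++ [(c, k, u)]) p
        = dstep p (variant B L p) (c, k, u) := by
      intro p
      rw [variant_eq, variant_eq, List.foldl_append, List.foldl_cons, List.foldl_nil]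
    match u with
    | Sum.inr f =>
      refine ⟨B', L' ++ [(c, k, Sum.inr f)], ?_, ?_, ?_, hbase⟩
      · intro op hop
        rcases List.mem_append.1 hop with h | h
        · exact hnr op h
        · simp at h; subst h; simp
      · intro p
        rw [hvapp, variant_eq, List.foldl_append, List.foldl_cons, List.foldl_nil,
          ← variant_eq, hvar p]
      · intro c' k' f' h
        rcases List.mem_append.1 h with h | h
        · obtain ⟨c₂, hc₂⟩ := hmod c' k' f' h
          exact ⟨c₂, List.mem_append_left _ hc₂⟩
        · exact ⟨c', List.mem_append_right _ h⟩
    | Sum.inl (some d) =>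
      refine ⟨B', L' ++ [(c, k, Sum.inl (some d))], ?_, ?_, ?_, hbase⟩
      · intro op hop
        rcases List.mem_append.1 hop with h | h
        · exact hnr op h
        · simp at h; subst h; simp
      · intro p
        rw [hvapp, variant_eq, List.foldl_append, List.foldl_cons, List.foldl_nil,
          ← variant_eq, hvar p]
      · intro c' k' f' h
        rcases List.mem_append.1 h with h | h
        · obtain ⟨c₂, hc₂⟩ := hmod c' k' f' h
          exact ⟨c₂, List.mem_append_left _ hc₂⟩
        · simp at h
    | Sum.inl none =>
      -- remove: reset base at k to none, conditionally re-add the old base value,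
      -- and disable all operations on k when the removal fires.
      refine ⟨Function.update B' k none,
        ((B' k).elim [] fun d => [((fun q => ¬ c q), k, Sum.inl (some d))]) ++
          L'.map (fun op => if op.2.1 = k then ((fun q => op.1 q ∧ ¬ c q), op.2) else op),
        ?_, ?_, ?_, ?_⟩
      · intro op hop
        rcases List.mem_append.1 hop with h | h
        · cases hB : B' k with
          | none => rw [hB] at h; simp at h
          | some d => rw [hB] at h; simp at h; subst h; simp
        · obtain ⟨op₀, h₀, rfl⟩ := List.mem_map.1 h
          by_cases hk0 : op₀.2.1 = k
          · simpa [hk0] using hnr op₀ h₀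
          · simpa [hk0] using hnr op₀ h₀
      · intro p
        rw [hvapp, variant_eq, List.foldl_append]
        by_cases hc : c p
        · have hpre : ((B' k).elim [] fun d => [((fun q => ¬ c q), k, Sum.inl (some d))]).foldl
              (dstep p) (Function.update B' k none) = Function.update B' k none := by
            cases hB : B' k with
            | none => simp
            | some d =>
              simp only [Option.elim, List.foldl_cons, List.foldl_nil]
              unfold dstep
              rw [if_neg (by simpa using hc)]
          rw [hpre, fold_true p hc L' B', ← variant_eq, hvar p]
          have : dstep p (variant B L p) (c, k, Sum.inl none)
              = Function.update (variant B L p) k none := by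
            unfold dstep; rw [if_pos hc]
          rw [this]
        · have hpre : ((B' k).elim [] fun d => [((fun q => ¬ c q), k, Sum.inl (some d))]).foldl
              (dstep p) (Function.update B' k none) = B' := by
            cases hB : B' k with
            | none =>
              simp only [Option.elim, List.foldl_nil]
              rw [← hB, Function.update_eq_self]
            | some d =>
              simp only [Option.elim, List.foldl_cons, List.foldl_nil]
              unfold dstep
              rw [if_pos (by simpa using hc)]
              simp only
              rw [Function.update_idem, ← hB, Function.update_eq_self]
          rw [hpre, fold_false p hc L' B', ← variant_eq, hvar p]
          have : dstep p (variant B L p) (c, k, Sum.inl none) = variant B L p := by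
            unfold dstep; rw [if_neg hc]
          rw [this]
      · intro c' k' f' h
        rcases List.mem_append.1 h with h | h
        · cases hB : B' k with
          | none => rw [hB] at h; simp at h
          | some d => rw [hB] at h; simp at h
        · obtain ⟨op₀, h₀, heq⟩ := List.mem_map.1 h
          by_cases hk0 : op₀.2.1 = k
          · rw [if_pos hk0] at heq
            have h2 : op₀.2 = (k', Sum.inr f') := congrArg Prod.snd heq
            obtain ⟨c₂, hc₂⟩ := hmod op₀.1 k' f' (by
              have : op₀ = (op₀.1, k', Sum.inr f') := by
                rw [← h2]
              rw [← this]; exact h₀)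
            exact ⟨c₂, List.mem_append_left _ hc₂⟩
          · rw [if_neg hk0] at heq
            subst heq
            obtain ⟨c₂, hc₂⟩ := hmod c' k' f' h₀
            exact ⟨c₂, List.mem_append_left _ hc₂⟩
      · intro j
        by_cases hj : j = k
        · subst hj; right; simp
        · rw [Function.update_of_ne hj]
          exact hbase j
end

section
/- Readd-pseudo-decreasing refactoring theorem in the presence of modify operations: for every base program B : α → Option β and every list L of generalized conditional delta operations, there exist a base program B' and a list L' of generalized conditional delta operations such that: (i) for every product p, variant B' L' p = variant B L p; (ii) every add of L', i.e. every operation (c', k, Sum.inl (some d)), satisfies B' k ≠ none (it is a readd of a reference declared in the base program); (iii) every modify of L', i.e. every operation (c', k, Sum.inr f), satisfies ∃ c, (c, k, Sum.inr f) ∈ L (the refactoring does not introduce new modify operations); and (iv) for every reference k, either B' k = B k, or B k = none and there exist c and d with (c, k, Sum.inl (some d)) ∈ L and B' k = some d. -/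
/-- Readd-pseudo-decreasing refactoring theorem in the presence of modify
operations. -/
theorem readd_pseudo_decreasing_refactoring {α β ρ : Type*} (B : α → Option β)
    (L : List ((ρ → Prop) × α × (Option β ⊕ (β → β)))) :
    ∃ (B' : α → Option β) (L' : List ((ρ → Prop) × α × (Option β ⊕ (β → β)))),
      (∀ p : ρ, variant B' L' p = variant B L p) ∧
      (∀ (c' : ρ → Prop) (k : α) (d : β), (c', k, Sum.inl (some d)) ∈ L' →
        B' k ≠ none) ∧
      (∀ (c' : ρ → Prop) (k : α) (f : β → β), (c', k, Sum.inr f) ∈ L' →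
        ∃ c : ρ → Prop, (c, k, Sum.inr f) ∈ L) ∧
      (∀ k : α, B' k = B k ∨
        (B k = none ∧ ∃ (c : ρ → Prop) (d : β),
          (c, k, Sum.inl (some d)) ∈ L ∧ B' k = some d)) := by
  classical
  let reAdd : α → Prop := fun k =>
    B k = none ∧ ∃ (c : ρ → Prop) (d : β), (c, k, Sum.inl (some d)) ∈ L
  let B' : α → Option β := fun k =>
    @dite (Option β) (reAdd k) (Classical.propDecidable _)
      (fun h => some h.2.choose_spec.choose) (fun _ => B k)
  let keys : List α := L.map fun op => op.2.1
  let pre : List ((ρ → Prop) × α × (Option β ⊕ (β → β))) :=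
    keys.map fun k => ((fun _ => True), k, Sum.inl (B k))
  -- helper: reAdd k implies k ∈ keys
  have hck : ∀ k, reAdd k → k ∈ keys := by
    intro k hk
    obtain ⟨c, d, hmem⟩ := hk.2
    exact List.mem_map.mpr ⟨(c, k, Sum.inl (some d)), hmem, rfl⟩
  have hB'eq : ∀ k, k ∉ keys → B' k = B k := by
    intro k hk
    have : ¬ reAdd k := fun h => hk (hck k h)
    simp only [B', dif_neg this]
  have hcons : ∀ (op : (ρ → Prop) × α × (Option β ⊕ (β → β)))
      (rest : List ((ρ → Prop) × α × (Option β ⊕ (β → β)))) (P : α → Option β) (p : ρ),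
      variant P (op :: rest) p =
        variant (if op.1 p then
          match op.2.2 with
          | Sum.inl o => Function.update P op.2.1 o
          | Sum.inr f => Function.update P op.2.1 (Option.map f (P op.2.1))
          else P) rest p := fun _ _ _ _ => rfl
  have happ : ∀ (P : α → Option β) (M N : List ((ρ → Prop) × α × (Option β ⊕ (β → β)))) (p : ρ),
      variant P (M ++ N) p = variant (variant P M p) N p := by
    intro P M N p
    simp [variant, List.foldl_append]
  have reset : ∀ (M : List α) (P : α → Option β) (p : ρ),
      variant P (M.map fun k => ((fun _ => (True : Prop)), k, Sum.inl (B k))) p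
        = fun k => if k ∈ M then B k else P k := by
    intro M
    induction M with
    | nil => intro P p; funext k; simp [variant]
    | cons a M ih =>
      intro P p
      rw [List.map_cons, hcons]
      simp only [if_pos trivial]
      rw [ih]
      funext j
      by_cases hja : j = a
      · subst hja
        by_cases hjM : j ∈ M <;> simp [hjM, Function.update]
      · by_cases hjM : j ∈ M <;>
          simp [hjM, hja, Function.update, List.mem_cons]
  have hB'pos : ∀ k (h : reAdd k), ∃ (c : ρ → Prop) (d : β),
      (c, k, Sum.inl (some d)) ∈ L ∧ B' k = some d := by
    intro k h
    exact ⟨h.2.choose, h.2.choose_spec.choose, h.2.choose_spec.choose_spec,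
      dif_pos h⟩
  have hB'neg : ∀ k, ¬ reAdd k → B' k = B k := fun k h => dif_neg h
  refine ⟨B', pre ++ L, ?_, ?_, ?_, ?_⟩
  · intro p
    rw [happ]
    have : variant B' pre p = B := by
      rw [reset]
      funext k
      by_cases hk : k ∈ keys
      · simp [hk]
      · simp [hk, hB'eq k hk]
    rw [this]
  · intro c' k d hmem
    rcases List.mem_append.mp hmem with h | h
    · obtain ⟨a, ha, heq⟩ := List.mem_map.mp h
      have hak : a = k := congrArg (fun x => x.2.1) heq
      have hBa : Sum.inl (B a) = (Sum.inl (some d) : Option β ⊕ (β → β)) :=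
        congrArg (fun x => x.2.2) heq
      have hBa' : B a = some d := Sum.inl_injective hBa
      subst hak
      have hnc : ¬ reAdd a := fun hh => by rw [hh.1] at hBa'; exact nomatch hBa'
      rw [hB'neg a hnc, hBa']
      exact fun hh => nomatch hh
    · rcases Classical.em (reAdd k) with hc | hc
      · obtain ⟨c, e, _, hbe⟩ := hB'pos k hc
        rw [hbe]; exact fun hh => nomatch hh
      · rw [hB'neg k hc]
        intro hBk
        exact hc ⟨hBk, c', d, h⟩
  · intro c' k f hmem
    rcases List.mem_append.mp hmem with h | h
    · obtain ⟨a, ha, heq⟩ := List.mem_map.mp h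
      have : (Sum.inl (B a) : Option β ⊕ (β → β)) = Sum.inr f :=
        congrArg (fun x => x.2.2) heq
      exact absurd this (by simp)
    · exact ⟨c', h⟩
  · intro k
    rcases Classical.em (reAdd k) with hc | hc
    · obtain ⟨c, d, hm, hbe⟩ := hB'pos k hc
      exact Or.inr ⟨hc.1, c, d, hm, hbe⟩
    · exact Or.inl (hB'neg k hc)
end
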